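/- In the predictor setting, assume additionally that μ > 0, that ⟨x,s⟩·⟨x̃,s̃⟩ ≥ ν², and that A and B are symmetric positive definite n×n matrices and lP, uD > 0 are reals with lP·μ·A ⪯ W and W ⪯ (uD/μ)·B⁻¹ in the Loewner order. Then lP·‖Δx‖_A² + (1/uD)·‖Δs‖_B² ≤ θ/β, where θ := ν·(1 − 2γ + γ²/β) + 1 − β/2 + γ²/(2β) − γ and ‖v‖_M := √(vᵀMv). -/

import Mathlib

set_option maxHeartbeats 1000000

open Matrix

/-- The norm induced by a (positive definite) matrix `P`: `‖v‖_P = √(vᵀ P v)`. -/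
noncomputable def vnorm {n : ℕ} (P : Matrix (Fin n) (Fin n) ℝ) (v : Fin n → ℝ) : ℝ :=
  Real.sqrt (v ⬝ᵥ (P *ᵥ v))

/-- The operator norm `‖Q‖_P = sup {‖Q u‖_{P⁻¹} : ‖u‖_P ≤ 1}`. -/
noncomputable def opNorm {n : ℕ} (P Q : Matrix (Fin n) (Fin n) ℝ) : ℝ :=
  sSup ((fun u => vnorm P⁻¹ (Q *ᵥ u)) '' {u : Fin n → ℝ | vnorm P u ≤ 1})

/-- The Loewner order: `Loewner P Q` means `P ⪯ Q`, i.e. `Q - P` is positive semidefinite. -/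
def Loewner {n : ℕ} (P Q : Matrix (Fin n) (Fin n) ℝ) : Prop :=
  (Q - P).PosSemidef

lemma symm_dot {n : ℕ} {W : Matrix (Fin n) (Fin n) ℝ} (hWs : Wᵀ = W)
    (a b : Fin n → ℝ) : (W *ᵥ a) ⬝ᵥ b = a ⬝ᵥ (W *ᵥ b) := by
  rw [dotProduct_mulVec a W b, ← mulVec_transpose, hWs, dotProduct_comm]

/-- Predictor norm bound in the local norms: `lP ‖Δx‖_A² + (1/uD) ‖Δs‖_B² ≤ θ/β`. -/
theorem stmt9 {n : ℕ}
    (ν β γ : ℝ) (hν : 1 ≤ ν) (hβ0 : 0 < β) (hβ1 : β ≤ 1)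
    (x s xt st Δx Δs : Fin n → ℝ) (τ κ Δτ Δκ : ℝ) (hτ : 0 < τ) (hκ : 0 < κ)
    (W : Matrix (Fin n) (Fin n) ℝ) (hWsymm : W.IsSymm) (hWpd : W.PosDef)
    (hWx : W *ᵥ x = s) (hWxt : W *ᵥ xt = st) (hxst : x ⬝ᵥ st = ν)
    (μe : ℝ) (hμe : μe = (x ⬝ᵥ s + τ * κ) / (ν + 1))
    (hN1 : β * μe ≤ τ * κ) (hN2 : β * μe * (xt ⬝ᵥ st) ≤ ν)
    (hdir1 : W *ᵥ Δx + Δs = -s + (γ * μe) • st)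
    (hdir2 : τ * Δκ + κ * Δτ = -(τ * κ) + γ * μe)
    (hdir3 : Δx ⬝ᵥ Δs + Δτ * Δκ = 0)
    (θ : ℝ) (hθ : θ = ν * (1 - 2 * γ + γ ^ 2 / β) + 1 - β / 2 + γ ^ 2 / (2 * β) - γ)
    (μ : ℝ) (hμ : μ = x ⬝ᵥ s / ν) (hμpos : 0 < μ)
    (hNT : ν ^ 2 ≤ (x ⬝ᵥ s) * (xt ⬝ᵥ st))
    (A B : Matrix (Fin n) (Fin n) ℝ)
    (hAsymm : A.IsSymm) (hApd : A.PosDef) (hBsymm : B.IsSymm) (hBpd : B.PosDef)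
    (lP uD : ℝ) (hlP : 0 < lP) (huD : 0 < uD)
    (hlow : Loewner ((lP * μ) • A) W)
    (hupp : Loewner W ((uD / μ) • B⁻¹)) :
    lP * vnorm A Δx ^ 2 + (1 / uD) * vnorm B Δs ^ 2 ≤ θ / β := by
  have hν0 : (0:ℝ) < ν := lt_of_lt_of_le one_pos hν
  have hν1 : (0:ℝ) < ν + 1 := by linarith
  -- matrix basics
  have hWs : Wᵀ = W := hWsymm
  have hWdet : IsUnit W.det := isUnit_iff_ne_zero.mpr hWpd.det_pos.ne'
  have hWcancel : ∀ v, W⁻¹ *ᵥ (W *ᵥ v) = v := fun v => by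
    rw [mulVec_mulVec, nonsing_inv_mul W hWdet, one_mulVec]
  have hWicancel : ∀ v, W *ᵥ (W⁻¹ *ᵥ v) = v := fun v => by
    rw [mulVec_mulVec, mul_nonsing_inv W hWdet, one_mulVec]
  have hBdet : IsUnit B.det := isUnit_iff_ne_zero.mpr hBpd.det_pos.ne'
  have hBcancel : B⁻¹ *ᵥ (B *ᵥ Δs) = Δs := by
    rw [mulVec_mulVec, nonsing_inv_mul B hBdet, one_mulVec]
  -- scalars
  set X : ℝ := x ⬝ᵥ s with hX
  set Xt : ℝ := xt ⬝ᵥ st with hXt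
  set t : ℝ := τ * κ with ht
  set c : ℝ := γ * μe with hc
  clear_value X Xt t c
  have ht0 : 0 < t := by rw [ht]; exact mul_pos hτ hκ
  have hXνμ : X = ν * μ := by rw [hμ]; field_simp
  have hμeq : (ν + 1) * μe = X + t := by rw [hμe]; field_simp
  have hμe0 : 0 < μe := by
    nlinarith only [hμeq, hXνμ, ht0, mul_pos hν0 hμpos, hν1]
  -- quadratic forms
  have hAq : 0 ≤ Δx ⬝ᵥ (A *ᵥ Δx) := by simpa using hApd.posSemidef.dotProduct_mulVec_nonneg Δx
  have hBq : 0 ≤ Δs ⬝ᵥ (B *ᵥ Δs) := by simpa using hBpd.posSemidef.dotProduct_mulVec_nonneg Δs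
  have hvA : vnorm A Δx ^ 2 = Δx ⬝ᵥ (A *ᵥ Δx) := Real.sq_sqrt hAq
  have hvB : vnorm B Δs ^ 2 = Δs ⬝ᵥ (B *ᵥ Δs) := Real.sq_sqrt hBq
  -- lower Loewner bound on Δx
  have hxW : lP * μ * (Δx ⬝ᵥ (A *ᵥ Δx)) ≤ Δx ⬝ᵥ (W *ᵥ Δx) := by
    have h0 := PosSemidef.dotProduct_mulVec_nonneg hlow Δx
    simp only [star_trivial, sub_mulVec, smul_mulVec, dotProduct_sub,
      dotProduct_smul, smul_eq_mul] at h0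
    linarith only [h0]
  -- upper Loewner bound gives lower bound on Δs ⬝ᵥ W⁻¹ Δs
  have hsW : (μ / uD) * (Δs ⬝ᵥ (B *ᵥ Δs)) ≤ Δs ⬝ᵥ (W⁻¹ *ᵥ Δs) := by
    set w : Fin n → ℝ := B *ᵥ Δs with hw
    clear_value w
    have hwB : w ⬝ᵥ (B⁻¹ *ᵥ w) = Δs ⬝ᵥ w := by
      rw [hBcancel]; exact dotProduct_comm _ _
    have hupp2 : w ⬝ᵥ (W *ᵥ w) ≤ (uD / μ) * (Δs ⬝ᵥ w) := by
      have h0 := PosSemidef.dotProduct_mulVec_nonneg hupp w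
      simp only [star_trivial, sub_mulVec, smul_mulVec, dotProduct_sub,
        dotProduct_smul, smul_eq_mul] at h0
      rw [hwB] at h0; linarith only [h0]
    set u : Fin n → ℝ := (μ / uD) • w with hu
    clear_value u
    have hq : 0 ≤ (u - W⁻¹ *ᵥ Δs) ⬝ᵥ (W *ᵥ (u - W⁻¹ *ᵥ Δs)) := by
      simpa using hWpd.posSemidef.dotProduct_mulVec_nonneg (u - W⁻¹ *ᵥ Δs)
    have hexp : (u - W⁻¹ *ᵥ Δs) ⬝ᵥ (W *ᵥ (u - W⁻¹ *ᵥ Δs)) =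
        u ⬝ᵥ (W *ᵥ u) - 2 * (u ⬝ᵥ Δs) + Δs ⬝ᵥ (W⁻¹ *ᵥ Δs) := by
      have h1 : (W⁻¹ *ᵥ Δs) ⬝ᵥ (W *ᵥ u) = u ⬝ᵥ Δs := by
        rw [dotProduct_comm, symm_dot hWs, hWicancel]
      have h2 : u ⬝ᵥ (W *ᵥ (W⁻¹ *ᵥ Δs)) = u ⬝ᵥ Δs := by rw [hWicancel]
      have h3 : (W⁻¹ *ᵥ Δs) ⬝ᵥ (W *ᵥ (W⁻¹ *ᵥ Δs)) = Δs ⬝ᵥ (W⁻¹ *ᵥ Δs) := by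
        rw [hWicancel, dotProduct_comm]
      rw [mulVec_sub]
      simp only [dotProduct_sub, sub_dotProduct]
      rw [h1, h2, h3]; ring
    have huu : u ⬝ᵥ (W *ᵥ u) = (μ / uD) ^ 2 * (w ⬝ᵥ (W *ᵥ w)) := by
      rw [hu, mulVec_smul, smul_dotProduct, dotProduct_smul, smul_eq_mul, smul_eq_mul]
      ring
    have hus : u ⬝ᵥ Δs = (μ / uD) * (w ⬝ᵥ Δs) := by
      rw [hu, smul_dotProduct, smul_eq_mul]
    have hsq : (μ / uD) ^ 2 * ((uD / μ) * (Δs ⬝ᵥ w)) = (μ / uD) * (Δs ⬝ᵥ w) := by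
      field_simp
    have h12 := mul_le_mul_of_nonneg_left hupp2 (sq_nonneg (μ / uD))
    rw [hexp, huu, hus] at hq
    have hwd : w ⬝ᵥ Δs = Δs ⬝ᵥ w := dotProduct_comm _ _
    rw [hwd] at hq
    linarith only [hq, h12, hsq]
  -- the residual identity
  set r : Fin n → ℝ := -s + c • st with hr
  clear_value r
  have hWix : W⁻¹ *ᵥ s = x := by rw [← hWx, hWcancel]
  have hWixt : W⁻¹ *ᵥ st = xt := by rw [← hWxt, hWcancel]
  have hsxt : s ⬝ᵥ xt = ν := by rw [← hWx, symm_dot hWs, hWxt, hxst]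
  have hstx : st ⬝ᵥ x = ν := by rw [dotProduct_comm, hxst]
  have hrW : r ⬝ᵥ (W⁻¹ *ᵥ r) = X - 2 * c * ν + c ^ 2 * Xt := by
    have h4 : W⁻¹ *ᵥ r = -x + c • xt := by
      rw [hr, mulVec_add, mulVec_neg, mulVec_smul, hWix, hWixt]
    rw [h4, hr]
    simp only [dotProduct_add, add_dotProduct, neg_dotProduct, dotProduct_neg,
      smul_dotProduct, dotProduct_smul, smul_eq_mul, neg_neg]
    have hsx : s ⬝ᵥ x = X := by rw [hX, dotProduct_comm]
    have hstxt : st ⬝ᵥ xt = Xt := by rw [hXt, dotProduct_comm]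
    rw [hsx, hsxt, hstx, hstxt]; ring
  have hkey : Δx ⬝ᵥ (W *ᵥ Δx) + Δs ⬝ᵥ (W⁻¹ *ᵥ Δs)
      = r ⬝ᵥ (W⁻¹ *ᵥ r) - 2 * (Δx ⬝ᵥ Δs) := by
    have hrdef : r = W *ᵥ Δx + Δs := hdir1.symm
    rw [hrdef, mulVec_add, hWcancel]
    simp only [dotProduct_add, add_dotProduct]
    have h1 : (W *ᵥ Δx) ⬝ᵥ Δx = Δx ⬝ᵥ (W *ᵥ Δx) := dotProduct_comm _ _
    have h2 : (W *ᵥ Δx) ⬝ᵥ (W⁻¹ *ᵥ Δs) = Δx ⬝ᵥ Δs := by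
      rw [symm_dot hWs, hWicancel]
    have h3 : Δs ⬝ᵥ Δx = Δx ⬝ᵥ Δs := dotProduct_comm _ _
    rw [h1, h2, h3]; ring
  -- bound the τκ part
  have hsum : τ * Δκ + κ * Δτ = c - t := by rw [hdir2, hc, ht]; ring
  have h4t : 4 * t * (Δτ * Δκ) ≤ (c - t) ^ 2 := by
    rw [← hsum, ht]; nlinarith only [sq_nonneg (τ * Δκ - κ * Δτ)]
  have hΔτκ : 2 * (Δτ * Δκ) ≤ t / 2 - c + c ^ 2 / (2 * t) := by
    have h5 : 2 * (Δτ * Δκ) ≤ (c - t) ^ 2 / (2 * t) := by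
      rw [le_div_iff₀ (by positivity)]; linarith only [h4t]
    have h6 : (c - t) ^ 2 / (2 * t) = t / 2 - c + c ^ 2 / (2 * t) := by
      field_simp; ring
    linarith only [h5, h6]
  have hc2t : c ^ 2 / (2 * t) ≤ γ ^ 2 * μe / (2 * β) := by
    rw [div_le_div_iff₀ (by positivity) (by positivity), hc]
    nlinarith only [mul_nonneg (mul_nonneg (sq_nonneg γ) hμe0.le) (sub_nonneg.mpr hN1)]
  -- bound c² Xt
  have hc2Xt : c ^ 2 * Xt ≤ γ ^ 2 * μe * (ν / β) := by
    have h8 : μe * Xt ≤ ν / β := by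
      rw [le_div_iff₀ hβ0]; linarith only [hN2]
    calc c ^ 2 * Xt = (γ ^ 2 * μe) * (μe * Xt) := by rw [hc]; ring
      _ ≤ (γ ^ 2 * μe) * (ν / β) :=
        mul_le_mul_of_nonneg_left h8 (by positivity)
      _ = γ ^ 2 * μe * (ν / β) := by ring
  -- μe bounds
  have hβμ : β * μe ≤ μ := by
    have hNT' : ν ^ 2 ≤ ν * μ * Xt := by rw [← hXνμ]; exact hNT
    have hXtlb : ν ≤ μ * Xt := by nlinarith only [hNT', hν0]
    nlinarith only [hN2, hXtlb, mul_pos hβ0 hμe0, hμpos, hν0]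
  have hμelb : ν * μ ≤ (ν + 1 - β) * μe := by
    linarith only [hμeq, hN1, hXνμ]
  -- assemble the scalar bound on S
  set e : ℝ := γ ^ 2 / (2 * β) - γ with he
  set d : ℝ := (ν + 1) / 2 + (2 * ν + 1) * e with hd
  clear_value e d
  have heβ : 0 ≤ e + β / 2 := by
    have h9 : e + β / 2 = (γ - β) ^ 2 / (2 * β) := by rw [he]; field_simp; ring
    rw [h9]; positivity
  have hθid : θ = ν + 1 - β / 2 + (2 * ν + 1) * e := by
    rw [hθ, he]; field_simp; ring
  have hteq : t = (ν + 1) * μe - ν * μ := by linarith only [hμeq, hXνμ]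
  have hSid : X - 2 * c * ν + γ ^ 2 * μe * (ν / β) + (t / 2 - c + γ ^ 2 * μe / (2 * β))
      = ν * μ / 2 + μe * d := by
    rw [hXνμ, hteq, hc, hd, he]; field_simp; ring
  have hS2 : Δx ⬝ᵥ (W *ᵥ Δx) + Δs ⬝ᵥ (W⁻¹ *ᵥ Δs) ≤ ν * μ / 2 + μe * d := by
    have hΔxΔs : Δx ⬝ᵥ Δs = -(Δτ * Δκ) := by linarith only [hdir3]
    rw [hkey, hrW, hΔxΔs]
    linarith only [hΔτκ, hc2t, hc2Xt, hSid]
  -- final scalar inequality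
  have hfinal : ν * μ / 2 + μe * d ≤ μ * θ / β := by
    rw [le_div_iff₀ hβ0]
    rcases le_or_gt 0 d with hd0 | hd0
    · have h8 : β * μe * d ≤ μ * d := mul_le_mul_of_nonneg_right hβμ hd0
      have h9 : μ * d + β * (ν * μ) / 2 ≤ μ * θ := by
        rw [hθid, hd]
        nlinarith only [mul_nonneg hμpos.le (mul_nonneg (sub_nonneg.mpr hβ1) hν1.le)]
      linarith only [h8, h9]
    · have hm : (0:ℝ) < ν + 1 - β := by linarith only [hν, hβ1]
      have h8 : ((ν + 1 - β) * μe) * d ≤ (ν * μ) * d :=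
        mul_le_mul_of_nonpos_right hμelb hd0.le
      have hscalar : β * (ν + 1 - β) * (ν / 2) + β * ν * d ≤ (ν + 1 - β) * θ := by
        rw [hθid, hd]
        nlinarith only [sq_nonneg ((ν + 1) * (1 - β)),
          mul_nonneg (mul_nonneg (mul_nonneg (sub_nonneg.mpr hβ1) hν1.le)
            (by linarith only [hν0] : (0:ℝ) ≤ 2 * ν + 1)) heβ]
      have hgoal : (ν + 1 - β) * ((ν * μ / 2 + μe * d) * β) ≤ (ν + 1 - β) * (μ * θ) := by
        have h10 := mul_le_mul_of_nonneg_left h8 hβ0.le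
        have h11 := mul_le_mul_of_nonneg_left hscalar hμpos.le
        nlinarith only [h10, h11]
      exact le_of_mul_le_mul_left hgoal hm
  -- combine
  rw [hvA, hvB]
  have hSW : (lP * (Δx ⬝ᵥ (A *ᵥ Δx)) + (1 / uD) * (Δs ⬝ᵥ (B *ᵥ Δs))) * μ
      ≤ ν * μ / 2 + μe * d := by
    have h13 : (1 / uD) * (Δs ⬝ᵥ (B *ᵥ Δs)) * μ = (μ / uD) * (Δs ⬝ᵥ (B *ᵥ Δs)) := by
      ring
    nlinarith only [hxW, hsW, hS2, h13]
  have h16 : (lP * (Δx ⬝ᵥ (A *ᵥ Δx)) + (1 / uD) * (Δs ⬝ᵥ (B *ᵥ Δs))) * μ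
      ≤ (θ / β) * μ := by
    have h17 : (θ / β) * μ = μ * θ / β := by ring
    linarith only [hSW, hfinal, h17]
  exact le_of_mul_le_mul_right h16 hμpos
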